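/- Let ν > 1 and 1/ν + 1/ν² < F < 2. Then (−ν−1+√(8F²ν⁴+ν²+2ν+1))/(2ν²(ν+1)) > F/√(2ν(ν+1)). Equivalently, H_* > F√H_R/√(2(√H_R+1)) with H_R := 1/ν² and H_* := (−ν−1+√(8F²ν⁴+ν²+2ν+1))/(2ν²(ν+1)). -/

import Mathlib

open Real

/-- Appendix inequality 2: in the discontinuous-profile regime,
`H_* > F√H_R/√(2(√H_R+1))`, written with `H_R = 1/ν²`. -/
theorem Hstar_gt_sonic_bound (F nu : ℝ) (hnu : 1 < nu)
    (hFlow : 1 / nu + 1 / nu ^ 2 < F) (hF2 : F < 2) :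
    (-nu - 1 + Real.sqrt (8 * F ^ 2 * nu ^ 4 + nu ^ 2 + 2 * nu + 1)) /
        (2 * nu ^ 2 * (nu + 1)) >
      F / Real.sqrt (2 * nu * (nu + 1)) := by
  have hnu0 : 0 < nu := by linarith
  have hF0 : 0 < F := by
    have : 0 < 1 / nu + 1 / nu ^ 2 := by positivity
    linarith
  set s := Real.sqrt (2 * nu * (nu + 1)) with hs
  have hs0 : 0 < s := Real.sqrt_pos.mpr (by positivity)
  have hs2 : s ^ 2 = 2 * nu * (nu + 1) := Real.sq_sqrt (by positivity)
  have hsb : s < 3 * nu - 1 := by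
    rw [hs]
    rw [show (3 * nu - 1) = Real.sqrt ((3 * nu - 1) ^ 2) from
      (Real.sqrt_sq (by linarith)).symm]
    apply Real.sqrt_lt_sqrt (by positivity)
    nlinarith
  have hFnu : nu + 1 < F * nu ^ 2 := by
    have h := (mul_lt_mul_iff_left₀ (show (0:ℝ) < nu ^ 2 by positivity)).mpr hFlow
    have : (1 / nu + 1 / nu ^ 2) * nu ^ 2 = nu + 1 := by
      field_simp
    linarith [this ▸ h]
  have hkey : (nu + 1 + F * nu * s) ^ 2 < 8 * F ^ 2 * nu ^ 4 + nu ^ 2 + 2 * nu + 1 := by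
    have h1 : (nu + 1) * s < F * nu ^ 2 * (3 * nu - 1) := by
      calc (nu + 1) * s < F * nu ^ 2 * s := by
            exact (mul_lt_mul_iff_left₀ hs0).mpr hFnu
        _ < F * nu ^ 2 * (3 * nu - 1) := by
            exact (mul_lt_mul_iff_right₀ (by positivity)).mpr hsb
    have h2 := mul_lt_mul_of_pos_left h1 (show (0:ℝ) < 2 * F * nu by positivity)
    have h3 : F ^ 2 * nu ^ 2 * s ^ 2 = F ^ 2 * nu ^ 2 * (2 * nu * (nu + 1)) := by
      rw [hs2]
    nlinarith [h2, h3]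
  have hd : nu + 1 + F * nu * s <
      Real.sqrt (8 * F ^ 2 * nu ^ 4 + nu ^ 2 + 2 * nu + 1) := by
    rw [show (8 * F ^ 2 * nu ^ 4 + nu ^ 2 + 2 * nu + 1) =
      Real.sqrt (8 * F ^ 2 * nu ^ 4 + nu ^ 2 + 2 * nu + 1) ^ 2 from
      (Real.sq_sqrt (by positivity)).symm] at hkey
    have hpos : 0 ≤ nu + 1 + F * nu * s := by positivity
    nlinarith [Real.sqrt_nonneg (8 * F ^ 2 * nu ^ 4 + nu ^ 2 + 2 * nu + 1)]
  rw [gt_iff_lt, div_lt_div_iff₀ hs0 (by positivity)]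
  nlinarith [hd, hs2, mul_pos (mul_pos hF0 hnu0) hs0]
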